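/- arXiv:2602.16877 — 2 statements merged into one kernel-verified Lean document; each statement's English description precedes it below -/
import Mathlib

section
/- For every even integer Δ ≥ 2, set r = 3Δ + 6. Then 6 divides r, r ≥ 12, and the data (q1, q2, q3) = (r/2, r/3, r/6) with columns (r/2, r/2), (r/3, r/3, r/3), and (r/6, r/6, r/6, r/6, r/6, r/6 − 1, 1) is a valid GL(r)-configuration whose dimension r² − Σ_{i=1}^{3} Σ_j (λ_i^j)² equals exactly Δ. In particular the bound r = 3Δ + 6 is achieved for every even Δ ≥ 2. -/
/-- A `GL(r)`-configuration: `r ≥ 1`, widths `q1,q2,q3` with `q1+q2+q3 = r`,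
and three columns, each a weakly decreasing list of positive integers summing
to `r` with every part at most the corresponding width. -/
structure GLConfig where
  r : ℕ
  q : Fin 3 → ℕ
  col : Fin 3 → List ℕ
  r_pos : 1 ≤ r
  q_sum : q 0 + q 1 + q 2 = r
  col_sorted : ∀ i, (col i).Pairwise (· ≥ ·)
  col_pos : ∀ i, ∀ x ∈ col i, 0 < x
  col_le : ∀ i, ∀ x ∈ col i, x ≤ q i
  col_sum : ∀ i, (col i).sum = r

/-- The (box) dimension `Δ = r² − Σ_{i=1}^{3} Σ_j (λ_i^j)²` of a
`GL(r)`-configuration. -/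
def GLConfig.dim (C : GLConfig) : ℤ :=
  (C.r : ℤ) ^ 2 - ∑ i : Fin 3, ((C.col i).map (fun x => (x : ℤ) ^ 2)).sum

/-- for every even integer `Δ ≥ 2`, setting `r = 3Δ + 6`, we have
`6 ∣ r`, `r ≥ 12`, and the data `(q1,q2,q3) = (r/2, r/3, r/6)` with columns
`(r/2, r/2)`, `(r/3, r/3, r/3)`, `(r/6, r/6, r/6, r/6, r/6, r/6 − 1, 1)` is a
valid `GL(r)`-configuration of dimension exactly `Δ`: the bound is achieved. -/
theorem GLConfig.bound_achieved (Δ : ℤ) (hΔeven : Even Δ) (hΔ : 2 ≤ Δ) :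
    ∃ C : GLConfig, (C.r : ℤ) = 3 * Δ + 6 ∧ 6 ∣ C.r ∧ 12 ≤ C.r ∧
      C.q 0 = C.r / 2 ∧ C.q 1 = C.r / 3 ∧ C.q 2 = C.r / 6 ∧
      C.col 0 = [C.r / 2, C.r / 2] ∧
      C.col 1 = [C.r / 3, C.r / 3, C.r / 3] ∧
      C.col 2 = [C.r / 6, C.r / 6, C.r / 6, C.r / 6, C.r / 6, C.r / 6 - 1, 1] ∧
      C.dim = Δ := by
  obtain ⟨k, hk⟩ := hΔeven
  have hk1 : 1 ≤ k := by omega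
  set m : ℕ := (k + 1).toNat with hm
  have hmk : (m : ℤ) = k + 1 := Int.toNat_of_nonneg (by omega)
  have hm2 : 2 ≤ m := by omega
  have e2 : 6 * m / 2 = 3 * m := by omega
  have e3 : 6 * m / 3 = 2 * m := by omega
  have e6 : 6 * m / 6 = m := by omega
  refine ⟨⟨6 * m, ![3 * m, 2 * m, m], ![[3 * m, 3 * m], [2 * m, 2 * m, 2 * m],
      [m, m, m, m, m, m - 1, 1]], by omega, by simp [Fin.isValue]; ring, ?_, ?_, ?_, ?_⟩,
      ?_, ⟨m, rfl⟩, ?_, ?_, ?_, ?_, ?_, ?_, ?_, ?_⟩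
  · intro i
    fin_cases i <;> simp [List.pairwise_cons] <;> omega
  · intro i x hx
    fin_cases i <;> simp_all <;> omega
  · intro i x hx
    fin_cases i <;> simp_all <;> omega
  · intro i
    fin_cases i <;> simp <;> omega
  · show ((6 * m : ℕ) : ℤ) = 3 * Δ + 6
    push_cast; omega
  · show 12 ≤ 6 * m; omega
  · show 3 * m = 6 * m / 2; omega
  · show 2 * m = 6 * m / 3; omega
  · show m = 6 * m / 6; omega
  · show [3 * m, 3 * m] = [6 * m / 2, 6 * m / 2]
    rw [e2]
  · show [2 * m, 2 * m, 2 * m] = [6 * m / 3, 6 * m / 3, 6 * m / 3]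
    rw [e3]
  · show [m, m, m, m, m, m - 1, 1] =
      [6 * m / 6, 6 * m / 6, 6 * m / 6, 6 * m / 6, 6 * m / 6, 6 * m / 6 - 1, 1]
    rw [e6]
  · have h1 : ((m - 1 : ℕ) : ℤ) = (m : ℤ) - 1 := by omega
    simp only [GLConfig.dim, Fin.sum_univ_three]
    simp [h1]
    push_cast
    nlinarith [hmk]
end

section
/- Let d > 2 be an even integer. Then every GL(r)-configuration whose dimension Δ satisfies Δ + 2 = d has r ≤ 3d. (This is the combinatorial content of the statement that every MC-minimal relative character variety with G = GL(r) of dimension d on the thrice-punctured projective line has rank r ≤ 3d, since such a character variety of dimension d determines a GL(r)-configuration with d = Δ + 2.) -/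
private lemma pw1 {x q : ℕ} (hx : 0 < x) (hxq : x < q) : q - 1 ≤ x * (q - x) := by
  obtain ⟨a, rfl⟩ : ∃ a, x = a + 1 := ⟨x - 1, by omega⟩
  obtain ⟨b, hb⟩ : ∃ b, q - (a+1) = b + 1 := ⟨q - (a+1) - 1, by omega⟩
  rw [hb]
  have : q - 1 = a + b + 1 := by omega
  nlinarith

/-- c1: sum of squares plus T equals q * sum -/
private lemma c1 {q : ℕ} : ∀ {l : List ℕ}, (∀ x ∈ l, x ≤ q) →
    (l.map (fun x => x ^ 2)).sum + (l.map (fun x => x * (q - x))).sum = q * l.sum := by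
  intro l
  induction l with
  | nil => simp
  | cons a t ih =>
    intro h
    simp only [List.map_cons, List.sum_cons]
    have ha : a ≤ q := h a (by simp)
    have iht := ih (fun x hx => h x (by simp [hx]))
    have h1 : a ^ 2 + a * (q - a) = q * a := by
      have h2 : a + (q - a) = q := by omega
      calc a ^ 2 + a * (q - a) = a * (a + (q - a)) := by ring
        _ = q * a := by rw [h2]; ring
    have h3 : q * (a + t.sum) = q * a + q * t.sum := by ring
    rw [h3]
    linarith

/-- c2: sum = q * (number of full parts) + defect sum -/
private lemma c2 {q : ℕ} : ∀ {l : List ℕ}, (∀ x ∈ l, x ≤ q) →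
    ∃ k, l.sum = q * k + (l.filter (fun x => x < q)).sum := by
  intro l
  induction l with
  | nil => exact fun _ => ⟨0, by simp⟩
  | cons a t ih =>
    intro h
    have ha : a ≤ q := h a (by simp)
    obtain ⟨k, hk⟩ := ih (fun x hx => h x (by simp [hx]))
    by_cases hlt : a < q
    · refine ⟨k, ?_⟩
      simp only [List.sum_cons, List.filter_cons]
      rw [if_pos (by simpa using hlt)]
      simp only [List.sum_cons]
      omega
    · refine ⟨k + 1, ?_⟩
      have : a = q := by omega
      simp only [List.sum_cons, List.filter_cons]
      rw [if_neg (by simpa using hlt)]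
      subst this
      rw [hk]; ring

/-- c3: S ≤ T -/
private lemma c3 {q : ℕ} : ∀ (l : List ℕ),
    (l.filter (fun x => x < q)).sum ≤ (l.map (fun x => x * (q - x))).sum := by
  intro l
  induction l with
  | nil => simp
  | cons a t ih =>
    by_cases hlt : a < q
    · simp only [List.filter_cons]; rw [if_pos (by simpa using hlt)]; simp only [List.sum_cons, List.map_cons]
      have : a ≤ a * (q - a) := by
        calc a = a * 1 := by ring
          _ ≤ a * (q - a) := Nat.mul_le_mul_left a (by omega)
      omega
    · simp only [List.filter_cons]; rw [if_neg (by simpa using hlt)]; simp only [List.map_cons, List.sum_cons]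
      omega

/-- c4: if no defect parts, T = 0 -/
private lemma c4 {q : ℕ} : ∀ {l : List ℕ}, (∀ x ∈ l, 0 < x) → (∀ x ∈ l, x ≤ q) →
    (l.filter (fun x => x < q)).sum = 0 → (l.map (fun x => x * (q - x))).sum = 0 := by
  intro l
  induction l with
  | nil => simp
  | cons a t ih =>
    intro hp hle hS
    have ha : a ≤ q := hle a (by simp)
    have hap : 0 < a := hp a (by simp)
    by_cases hlt : a < q
    · simp only [List.filter_cons] at hS; rw [if_pos (by simpa using hlt)] at hS; simp only [List.sum_cons] at hS
      omega
    · simp only [List.filter_cons] at hS; rw [if_neg (by simpa using hlt)] at hS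
      have ha' : a = q := by omega
      simp only [List.map_cons, List.sum_cons, ha', Nat.sub_self, Nat.mul_zero, Nat.zero_add]
      exact ih (fun x hx => hp x (by simp [hx])) (fun x hx => hle x (by simp [hx])) hS

/-- helper: sum of map over filter ≤ sum of map -/
private lemma cfil {q : ℕ} (f : ℕ → ℕ) : ∀ (l : List ℕ),
    ((l.filter (fun x => x < q)).map f).sum ≤ (l.map f).sum := by
  intro l
  induction l with
  | nil => simp
  | cons a t ih =>
    by_cases hlt : a < q
    · simp only [List.filter_cons]; rw [if_pos (by simpa using hlt)]; simp only [List.map_cons, List.sum_cons]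
      omega
    · simp only [List.filter_cons]; rw [if_neg (by simpa using hlt)]; simp only [List.map_cons, List.sum_cons]
      omega

/-- c5: defective column has T ≥ q - 1 -/
private lemma c5 {q : ℕ} {l : List ℕ} (hp : ∀ x ∈ l, 0 < x)
    (hS : 0 < (l.filter (fun x => x < q)).sum) :
    q - 1 ≤ (l.map (fun x => x * (q - x))).sum := by
  have hne : (l.filter (fun x => x < q)) ≠ [] := by
    intro h; rw [h] at hS; simp at hS
  obtain ⟨x, hx⟩ := List.exists_mem_of_ne_nil _ hne
  have hxl : x ∈ l := List.mem_of_mem_filter hx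
  have hxq : x < q := by
    have := List.of_mem_filter hx
    simpa using this
  have hxp : 0 < x := hp x hxl
  calc q - 1 ≤ x * (q - x) := pw1 hxp hxq
    _ ≤ (l.map (fun x => x * (q - x))).sum :=
      List.single_le_sum (fun y _ => Nat.zero_le y) _ (List.mem_map_of_mem hxl)

/-- c6: if defect sum S ≤ q then T ≥ S * (q - S) -/
private lemma c6 {q : ℕ} {l : List ℕ}
    (hS : (l.filter (fun x => x < q)).sum ≤ q) :
    (l.filter (fun x => x < q)).sum * (q - (l.filter (fun x => x < q)).sum)
      ≤ (l.map (fun x => x * (q - x))).sum := by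
  set D := l.filter (fun x => x < q) with hD
  set S := D.sum with hSdef
  have h1 : (D.map (fun x => x * (q - S))).sum = S * (q - S) := by
    simpa using List.sum_map_mul_right D (fun x => x) (q - S)
  have h2 : (D.map (fun x => x * (q - S))).sum ≤ (D.map (fun x => x * (q - x))).sum := by
    apply List.sum_le_sum
    intro x hx
    have hxS : x ≤ S := List.single_le_sum (fun y _ => Nat.zero_le y) _ hx
    exact Nat.mul_le_mul_left x (by omega)
  calc S * (q - S) = (D.map (fun x => x * (q - S))).sum := h1.symm
    _ ≤ (D.map (fun x => x * (q - x))).sum := h2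
    _ ≤ (l.map (fun x => x * (q - x))).sum := cfil _ l

/-- c7: if defect sum S ≥ q then T ≥ 2*(q-1) -/
private lemma c7 {q : ℕ} {l : List ℕ} (hp : ∀ x ∈ l, 0 < x)
    (hS : q ≤ (l.filter (fun x => x < q)).sum) :
    2 * (q - 1) ≤ (l.map (fun x => x * (q - x))).sum := by
  rcases Nat.eq_zero_or_pos q with hq | hq
  · simp [hq]
  set D := l.filter (fun x => x < q) with hD
  have hDlt : ∀ x ∈ D, x < q := by
    intro x hx; have := List.of_mem_filter hx; simpa using this
  have hDp : ∀ x ∈ D, 0 < x := fun x hx => hp x (List.mem_of_mem_filter hx)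
  have hlen : D.sum ≤ D.length * (q - 1) := by
    have := List.sum_le_card_nsmul D (q - 1) (fun x hx => by have := hDlt x hx; omega)
    simpa [smul_eq_mul, Nat.mul_comm] using this
  have h2 : 2 ≤ D.length := by
    by_contra hh
    push_neg at hh
    have : D.length * (q - 1) ≤ 1 * (q - 1) := Nat.mul_le_mul_right _ (by omega)
    omega
  have h3 : D.length * (q - 1) ≤ (D.map (fun x => x * (q - x))).sum := by
    have := List.card_nsmul_le_sum (l := D.map (fun x => x * (q - x))) (n := q - 1) ?_
    · simpa [smul_eq_mul, Nat.mul_comm] using this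
    · intro x hx
      obtain ⟨y, hy, rfl⟩ := List.mem_map.1 hx
      exact pw1 (hDp y hy) (hDlt y hy)
  have h4 : 2 * (q - 1) ≤ D.length * (q - 1) := Nat.mul_le_mul_right _ h2
  calc 2 * (q - 1) ≤ D.length * (q - 1) := h4
    _ ≤ (D.map (fun x => x * (q - x))).sum := h3
    _ ≤ (l.map (fun x => x * (q - x))).sum := cfil _ l


/-- If `c * qc = r` with `c ≤ 6`, `r = qc * kc + S`, `0 < S`, then `qc ≤ S`,
so the count bound `2*(qc-1) ≤ T` gives `r ≤ 3T + 6`. -/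
private lemma sub1 {r qc S T kc c : ℕ} (hc : c * qc = r) (hc6 : c ≤ 6) (hqc : 0 < qc)
    (hs : r = qc * kc + S) (hSpos : 0 < S)
    (hcount : qc ≤ S → 2 * (qc - 1) ≤ T) : r ≤ 3 * T + 6 := by
  have h1 : qc ≤ S := by
    have hk : kc < c := by
      by_contra h
      push_neg at h
      have h2 : qc * c ≤ qc * kc := Nat.mul_le_mul_left _ h
      rw [Nat.mul_comm qc c] at h2
      omega
    have h3 : qc * (kc + 1) ≤ qc * c := Nat.mul_le_mul_left _ hk
    rw [Nat.mul_comm qc c, Nat.mul_succ] at h3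
    omega
  have h2 := hcount h1
  have h3 : c * qc ≤ 6 * qc := Nat.mul_le_mul_right _ hc6
  omega

/-- The `(2,5)` case: `10 qc = 3r`. -/
private lemma sub2 {r qc S T kc : ℕ} (h10 : 10 * qc = 3 * r) (hqc : 0 < qc)
    (hs : r = qc * kc + S) (hSpos : 0 < S)
    (hsmall : S ≤ qc → S * (qc - S) ≤ T)
    (hcount : qc ≤ S → 2 * (qc - 1) ≤ T) : r ≤ 3 * T + 6 := by
  by_cases hx : qc ≤ S
  · have := hcount hx
    omega
  · push_neg at hx
    have hk3 : kc = 3 := by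
      have h4 : kc < 4 := by
        by_contra h
        push_neg at h
        have : qc * 4 ≤ qc * kc := Nat.mul_le_mul_left _ h
        omega
      have h3 : 3 ≤ kc := by
        by_contra h
        push_neg at h
        have : qc * kc ≤ qc * 2 := Nat.mul_le_mul_left _ (by omega)
        omega
      omega
    subst hk3
    have hq3 : qc = 3 * S := by omega
    have hsub : qc - S = 2 * S := by omega
    have hT := hsmall (by omega)
    rw [hsub] at hT
    have hr10 : r = 10 * S := by omega
    obtain ⟨s, rfl⟩ : ∃ s, S = s + 1 := ⟨S - 1, by omega⟩
    have key : 10 * (s + 1) ≤ 3 * ((s + 1) * (2 * (s + 1))) + 6 := by nlinarith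
    omega

/-- Case: one full column `qa`, two defective. -/
private lemma case_two {r qa qb qc Tb Tc : ℕ} (hr : qa + qb + qc = r)
    (hqa : 1 ≤ qa) (hqb : 1 ≤ qb) (hqc : 1 ≤ qc)
    (hka : ∃ k, r = qa * k)
    (h1 : qb - 1 ≤ Tb) (h2 : qc - 1 ≤ Tc) : r ≤ 2 * (Tb + Tc) + 4 := by
  obtain ⟨k, hk⟩ := hka
  have h2qa : 2 * qa ≤ r := by
    rcases k with _ | _ | k
    · omega
    · omega
    · have : qa * 2 ≤ qa * (k + 1 + 1) := Nat.mul_le_mul_left _ (by omega)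
      omega
  omega

/-- Hard case: two full columns, one defective column `qc` with defect sum `S`
and defect total `T`. -/
private lemma hard {r qa qb qc T S : ℕ} (hr : qa + qb + qc = r)
    (hqa : 1 ≤ qa) (hqb : 1 ≤ qb) (hqc : 1 ≤ qc)
    (hka : ∃ k, r = qa * k) (hkb : ∃ k, r = qb * k)
    (hS : ∃ k, r = qc * k + S) (hSpos : 0 < S)
    (hdef : qc - 1 ≤ T)
    (hsmall : S ≤ qc → S * (qc - S) ≤ T)
    (hcount : qc ≤ S → 2 * (qc - 1) ≤ T) : r ≤ 3 * T + 6 := by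
  obtain ⟨ka, hka⟩ := hka
  obtain ⟨kb, hkb⟩ := hkb
  obtain ⟨kc, hs⟩ := hS
  by_cases h3 : r ≤ 3 * qc
  · omega
  · push_neg at h3
    -- both full columns have cofactor in [2,5]
    have h2qa : 2 * qa ≤ r := by
      rcases ka with _ | _ | k
      · omega
      · omega
      · have : qa * 2 ≤ qa * (k + 1 + 1) := Nat.mul_le_mul_left _ (by omega)
        omega
    have h2qb : 2 * qb ≤ r := by
      rcases kb with _ | _ | k
      · omega
      · omega
      · have : qb * 2 ≤ qb * (k + 1 + 1) := Nat.mul_le_mul_left _ (by omega)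
        omega
    have h6qa : r < 6 * qa := by omega
    have h6qb : r < 6 * qb := by omega
    have hka5 : 2 ≤ ka ∧ ka ≤ 5 := by
      constructor
      · rcases ka with _ | _ | k
        · omega
        · omega
        · omega
      · by_contra h
        push_neg at h
        have : qa * 6 ≤ qa * ka := Nat.mul_le_mul_left _ (by omega)
        omega
    have hkb5 : 2 ≤ kb ∧ kb ≤ 5 := by
      constructor
      · rcases kb with _ | _ | k
        · omega
        · omega
        · omega
      · by_contra h
        push_neg at h
        have : qb * 6 ≤ qb * kb := Nat.mul_le_mul_left _ (by omega)
        omega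
    obtain ⟨hka2, hka5'⟩ := hka5
    obtain ⟨hkb2, hkb5'⟩ := hkb5
    interval_cases ka <;> interval_cases kb <;>
      first
        | omega
        | exact sub1 (c := 6) (by omega) (by omega) hqc hs hSpos hcount
        | exact sub1 (c := 4) (by omega) (by omega) hqc hs hSpos hcount
        | exact sub2 (by omega) hqc hs hSpos hsmall hcount

private lemma castsq : ∀ l : List ℕ,
    (l.map (fun x => (x : ℤ) ^ 2)).sum = (((l.map (fun x => x ^ 2)).sum : ℕ) : ℤ) := by
  intro l
  induction l with
  | nil => simp
  | cons a t ih =>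
    simp only [List.flatMap_cons, List.map_cons, List.sum_cons, List.map_append, List.sum_append] at *
    push_cast
    push_cast at ih
    simp at *
    linarith

/-- for `d > 2` even, every `GL(r)`-configuration whose
dimension `Δ` satisfies `Δ + 2 = d` has `r ≤ 3d`. (Combinatorial content of:
every MC-minimal relative character variety with `G = GL(r)` of dimension `d`
on `ℙ¹ ∖ {t1,t2,t3}` has rank `r ≤ 3d`.) -/
theorem GLConfig.rank_le_of_charvar_dim (d : ℤ) (hd : 2 < d) (hdeven : Even d)
    (C : GLConfig) (hdim : C.dim + 2 = d) : (C.r : ℤ) ≤ 3 * d := by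
  have hq : ∀ i : Fin 3, 1 ≤ C.q i := by
    intro i
    have hne : C.col i ≠ [] := by
      intro h
      have hs := C.col_sum i
      rw [h] at hs
      simp at hs
      have := C.r_pos
      omega
    obtain ⟨x, hx⟩ := List.exists_mem_of_ne_nil _ hne
    have h1 := C.col_pos i x hx
    have h2 := C.col_le i x hx
    omega
  set T : Fin 3 → ℕ := fun i => ((C.col i).map (fun x => x * (C.q i - x))).sum with hT
  set S : Fin 3 → ℕ := fun i => ((C.col i).filter (fun x => x < C.q i)).sum with hSdef
  -- dimension equals total defect
  have hkey : (((C.col 0).map (fun x => x ^ 2)).sum + ((C.col 1).map (fun x => x ^ 2)).sum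
      + ((C.col 2).map (fun x => x ^ 2)).sum) + (T 0 + T 1 + T 2) = C.r ^ 2 := by
    have h0 := c1 (C.col_le 0)
    have h1 := c1 (C.col_le 1)
    have h2 := c1 (C.col_le 2)
    rw [C.col_sum 0] at h0
    rw [C.col_sum 1] at h1
    rw [C.col_sum 2] at h2
    have hqs := C.q_sum
    have : C.q 0 * C.r + C.q 1 * C.r + C.q 2 * C.r = C.r ^ 2 := by
      rw [← hqs]; ring
    simp only [hT]
    omega
  have hTd : C.dim = ((T 0 + T 1 + T 2 : ℕ) : ℤ) := by
    unfold GLConfig.dim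
    rw [Fin.sum_univ_three, castsq, castsq, castsq]
    have := hkey
    push_cast
    push_cast at this
    linarith
  have hΔ1 : 1 ≤ T 0 + T 1 + T 2 := by
    rw [hTd] at hdim
    omega
  suffices h : C.r ≤ 3 * (T 0 + T 1 + T 2) + 6 by
    rw [hTd] at hdim
    have : ((C.r : ℕ) : ℤ) ≤ ((3 * (T 0 + T 1 + T 2) + 6 : ℕ) : ℤ) := by exact_mod_cast h
    push_cast at this
    omega
  have hdefect : ∀ i, 0 < S i → C.q i - 1 ≤ T i := fun i h => c5 (C.col_pos i) h
  have hfull : ∀ i, S i = 0 → ∃ k, C.r = C.q i * k := by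
    intro i h
    obtain ⟨k, hk⟩ := c2 (C.col_le i)
    rw [C.col_sum i] at hk
    exact ⟨k, by simp only [hSdef] at h; omega⟩
  have hzero : ∀ i, S i = 0 → T i = 0 := fun i h => c4 (C.col_pos i) (C.col_le i) h
  have hexk : ∀ i, ∃ k, C.r = C.q i * k + S i := by
    intro i
    obtain ⟨k, hk⟩ := c2 (C.col_le i)
    rw [C.col_sum i] at hk
    exact ⟨k, hk⟩
  have hsmall : ∀ i, S i ≤ C.q i → S i * (C.q i - S i) ≤ T i := fun i h => c6 h
  have hcount : ∀ i, C.q i ≤ S i → 2 * (C.q i - 1) ≤ T i := fun i h => c7 (C.col_pos i) h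
  have hqsum := C.q_sum
  have hq0 := hq 0
  have hq1 := hq 1
  have hq2 := hq 2
  by_cases h0 : S 0 = 0 <;> by_cases h1 : S 1 = 0 <;> by_cases h2 : S 2 = 0
  · -- all full: contradiction
    have e0 := hzero 0 h0
    have e1 := hzero 1 h1
    have e2 := hzero 2 h2
    omega
  · -- only column 2 defective
    have := hard hqsum hq0 hq1 hq2 (hfull 0 h0) (hfull 1 h1) (hexk 2) (by omega)
      (hdefect 2 (by omega)) (hsmall 2) (hcount 2)
    omega
  · -- only column 1 defective
    have := hard (r := C.r) (qa := C.q 0) (qb := C.q 2) (qc := C.q 1) (by omega) hq0 hq2 hq1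
      (hfull 0 h0) (hfull 2 h2) (hexk 1) (by omega)
      (hdefect 1 (by omega)) (hsmall 1) (hcount 1)
    omega
  · -- columns 1,2 defective, 0 full
    have := case_two (r := C.r) (qa := C.q 0) (qb := C.q 1) (qc := C.q 2) hqsum hq0 hq1 hq2
      (hfull 0 h0) (hdefect 1 (by omega)) (hdefect 2 (by omega))
    omega
  · -- only column 0 defective
    have := hard (r := C.r) (qa := C.q 1) (qb := C.q 2) (qc := C.q 0) (by omega) hq1 hq2 hq0
      (hfull 1 h1) (hfull 2 h2) (hexk 0) (by omega)
      (hdefect 0 (by omega)) (hsmall 0) (hcount 0)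
    omega
  · -- columns 0,2 defective, 1 full
    have := case_two (r := C.r) (qa := C.q 1) (qb := C.q 0) (qc := C.q 2) (by omega) hq1 hq0 hq2
      (hfull 1 h1) (hdefect 0 (by omega)) (hdefect 2 (by omega))
    omega
  · -- columns 0,1 defective, 2 full
    have := case_two (r := C.r) (qa := C.q 2) (qb := C.q 0) (qc := C.q 1) (by omega) hq2 hq0 hq1
      (hfull 2 h2) (hdefect 0 (by omega)) (hdefect 1 (by omega))
    omega
  · -- all defective
    have d0 := hdefect 0 (by omega)
    have d1 := hdefect 1 (by omega)
    have d2 := hdefect 2 (by omega)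
    omega
end
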